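/- In the AIR matrix L of size K × (D+1), if L(j,k) = 1 lies in an even submatrix I_{λ_{2i} × β_{2i} λ_{2i}} with within-block column index k_R = c·λ_{2i} + d (0 ≤ d < λ_{2i}), then d_up(j,k) = λ_{2i−1} − c·λ_{2i}. -/

import Mathlib

/-- Euclidean chain: `lam K D 0 = λ_{-1} = D+1`, `lam K D 1 = λ_0 = K-D-1`, and
`lam K D (i+1) = λ_i` is the remainder of `λ_{i-2}` divided by `λ_{i-1}`
(with the convention that once a term is `0`, all later terms are `0`). -/
def lam (K D : ℕ) : ℕ → ℕ
  | 0 => D + 1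
  | 1 => K - D - 1
  | (n + 2) => if lam K D (n + 1) = 0 then 0 else lam K D n % lam K D (n + 1)

/-- The AIR (Adjacent-Row-Independent) matrix construction: `airFill m n j k = true`
iff the `(j,k)` entry of the `m × n` AIR matrix is `1`.  The first `m - m % n` rows
are stacked `n × n` identities; the remaining `(m % n) × n` part is the transpose of
the `n × (m % n)` AIR matrix. -/
def airFill : ℕ → ℕ → ℕ → ℕ → Bool
  | m, n, j, k =>
    if h : n = 0 then false
    else if j < m - m % n then decide (j % n = k)
    else airFill n (m % n) k (j - (m - m % n))
  termination_by m n _ _ => n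
  decreasing_by exact Nat.mod_lt _ (Nat.pos_of_ne_zero h)

/-- Down-distance: distance from the diagonal `1` at `(k,k)` to the lowest `1`
in column `k` of the `K × (D+1)` AIR matrix. -/
def ddown (K D k : ℕ) : ℕ :=
  (((Finset.range K).filter (fun j => airFill K (D+1) j k = true)).sup id) - k

/-- Up-distance: distance from the `1` at `(j,k)` to the nearest `1` above it in column `k`. -/
def dup (K D j k : ℕ) : ℕ :=
  j - (((Finset.range j).filter (fun j' => airFill K (D+1) j' k = true)).sup id)

/-- Right-distance: distance from the `1` at `(j,k)` to the nearest `1` to its right in row `j`. -/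
noncomputable def dright (K D j k : ℕ) : ℕ :=
  sInf {k' : ℕ | k < k' ∧ airFill K (D+1) j k' = true} - k

/-- Up-distance in an even ('tall') submatrix `I_{λ_{2i} × β_{2i}λ_{2i}}`
(rows `[K - λ_{2i}, K - 1]`, columns `[D + 1 - λ_{2i-1}, D - λ_{2i+1}]`):
if `L(j,k) = 1` there (with `j ≥ D+1`) and the within-block column index
`k_R = k mod (D+1-λ_{2i-1})` equals `c·λ_{2i} + d` with `d < λ_{2i}`, then
`d_up(j,k) = λ_{2i-1} - c·λ_{2i}`. -/
def ch (a b : ℕ) : ℕ → ℕ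
  | 0 => a
  | 1 => b
  | (n + 2) => if ch a b (n + 1) = 0 then 0 else ch a b n % ch a b (n + 1)

lemma ch_succ (a b t : ℕ) :
    ch a b (t+2) = if ch a b (t+1) = 0 then 0 else ch a b t % ch a b (t+1) := rfl

lemma lam_eq_ch (K D : ℕ) : ∀ t, lam K D t = ch (D+1) (K-D-1) t
  | 0 => rfl
  | 1 => rfl
  | (t+2) => by rw [lam, ch_succ, lam_eq_ch K D t, lam_eq_ch K D (t+1)]

lemma ch_shift (a b : ℕ) : ∀ t, ch (ch a b 2) (ch a b 3) t = ch a b (t+2)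
  | 0 => rfl
  | 1 => rfl
  | (t+2) => by
      rw [ch_succ, ch_shift a b t, ch_shift a b (t+1)]
      rfl

lemma ch_anti (a b t : ℕ) : ch a b (t+2) ≤ ch a b (t+1) := by
  rw [ch_succ]
  split
  · omega
  · exact le_of_lt (Nat.mod_lt _ (by omega))

lemma ch_mono (a b : ℕ) {s t : ℕ} (h : s ≤ t) : ch a b (t+1) ≤ ch a b (s+1) := by
  induction t with
  | zero => have : s = 0 := by omega
            subst this; rfl
  | succ t ih =>
      rcases Nat.lt_or_ge s (t+1) with h' | h'
      · exact le_trans (ch_anti a b t) (ih (by omega))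
      · have : s = t+1 := by omega
        subst this; rfl

lemma ch_mono' (a b : ℕ) {s t : ℕ} (h1 : 1 ≤ s) (h : s ≤ t) : ch a b t ≤ ch a b s := by
  obtain ⟨s', rfl⟩ : ∃ s', s = s'+1 := ⟨s-1, by omega⟩
  obtain ⟨t', rfl⟩ : ∃ t', t = t'+1 := ⟨t-1, by omega⟩
  exact ch_mono a b (by omega)

lemma ch_ne_zero' (a b : ℕ) {s t : ℕ} (h : ch a b t ≠ 0) (h1 : 1 ≤ s) (hst : s ≤ t) :
    ch a b s ≠ 0 := by
  have := ch_mono' a b h1 hst; omega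

lemma ch_strict (a b t : ℕ) (h : ch a b (t+1) ≠ 0) : ch a b (t+2) < ch a b (t+1) := by
  rw [ch_succ, if_neg h]
  exact Nat.mod_lt _ (by omega)

lemma ch_add_le (a b t : ℕ) (h : ch a b (t+1) ≠ 0) (hle : ch a b (t+1) ≤ ch a b t) :
    ch a b (t+2) + ch a b (t+1) ≤ ch a b t := by
  rw [ch_succ, if_neg h]
  have h1 := Nat.mod_add_div (ch a b t) (ch a b (t+1))
  have h2 : 1 ≤ ch a b t / ch a b (t+1) := (Nat.one_le_div_iff (by omega)).mpr hle
  have h3 : ch a b (t+1) * 1 ≤ ch a b (t+1) * (ch a b t / ch a b (t+1)) :=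
    Nat.mul_le_mul_left _ h2
  omega

lemma mod_plus (a b : ℕ) (hb : b ≠ 0) (hba : b ≤ a) : a % b + b ≤ a := by
  have h1 := Nat.mod_add_div a b
  have h2 : 1 ≤ a / b := (Nat.one_le_div_iff (by omega)).mpr hba
  have h3 : b * 1 ≤ b * (a / b) := Nat.mul_le_mul_left _ h2
  omega

lemma air_eq (m n j k : ℕ) : airFill m n j k =
    if n = 0 then false else if j < m - m % n then decide (j % n = k)
    else airFill n (m % n) k (j - (m - m % n)) := by
  rw [airFill]; split <;> simp_all

lemma G : ∀ i n m j k c d, 0 < n → n ≤ m →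
    ch n (m % n) (2*i+1) ≠ 0 →
    m - ch n (m % n) (2*i+1) ≤ j → j < m → m - m % n ≤ j →
    n - ch n (m % n) (2*i) ≤ k → k + ch n (m % n) (2*i+2) < n →
    k % (n - ch n (m % n) (2*i)) = c * ch n (m % n) (2*i+1) + d →
    d < ch n (m % n) (2*i+1) →
    airFill m n j k = true →
    ∃ p, p < j ∧ airFill m n p k = true ∧
      (∀ q, p < q → q < j → airFill m n q k = false) ∧
      j - p = ch n (m % n) (2*i) - c * ch n (m % n) (2*i+1) := by
  intro i
  induction i with
  | zero =>
    intro n m j k c d hn hnm hne hrow1 hrow2 hj hcol1 hcol2 hkR hd hjk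
    norm_num at hne hrow1 hcol1 hcol2 hkR hd ⊢
    have e0 : ch n (m % n) 0 = n := rfl
    have e1 : ch n (m % n) 1 = m % n := rfl
    rw [e1] at hne hrow1 hd hkR
    rw [e0, Nat.sub_self, Nat.mod_zero] at hkR
    rw [e0, e1]
    have e2 : ch n (m % n) 2 = n % (m % n) := by
      rw [ch_succ, if_neg (by rw [e1]; exact hne), e0, e1]
    rw [e2] at hcol2
    -- basic arithmetic facts
    have hr : m % n ≠ 0 := hne
    have o2 : n % (m % n) < m % n := Nat.mod_lt _ (by omega)
    have hkn : k < n := by omega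
    have hq1 : 1 ≤ m / n := (Nat.one_le_div_iff hn).mpr hnm
    have hq := Nat.mod_add_div m n
    obtain ⟨Q, hQ⟩ : ∃ Q, m / n = Q + 1 := ⟨m / n - 1, by omega⟩
    rw [hQ] at hq
    have hmul : n * (Q + 1) = n * Q + n := by ring
    have hmr : m - m % n = n * Q + n := by omega
    -- decode j
    rw [air_eq, if_neg (by omega), if_neg (by omega)] at hjk
    rw [air_eq, if_neg hr, if_pos (by omega)] at hjk
    have hjd : k % (m % n) = j - (m - m % n) := by simpa using hjk
    have hkr : k % (m % n) = d := by
      rw [hkR, Nat.mul_add_mod', Nat.mod_eq_of_lt hd]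
    have hjj : j = (m - m % n) + d := by omega
    -- the product as an atom
    generalize hcr : c * (m % n) = cr at hkR ⊢
    have hcrk : cr ≤ k := by omega
    refine ⟨n * Q + k, by omega, ?_, ?_, by omega⟩
    · rw [air_eq, if_neg (by omega), if_pos (by omega)]
      have : (n * Q + k) % n = k := by
        rw [Nat.mul_add_mod, Nat.mod_eq_of_lt hkn]
      simp [this]
    · intro q hq1' hq2'
      rw [air_eq, if_neg (by omega)]
      split
      · simp only [decide_eq_false_iff_not]
        intro heq
        have hdm := Nat.div_add_mod q n
        rw [heq] at hdm
        have h1 : n * Q < n * (q / n) := by omega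
        have h2 : n * (q / n) < n * (Q + 1) := by omega
        have h3 : Q < q / n := Nat.lt_of_mul_lt_mul_left h1
        have h4 : q / n < Q + 1 := Nat.lt_of_mul_lt_mul_left h2
        omega
      · rw [air_eq, if_neg hr, if_pos (by omega)]
        simp only [decide_eq_false_iff_not]
        omega
  | succ i ih =>
    intro n m j k c d hn hnm hne hrow1 hrow2 hj hcol1 hcol2 hkR hd hjk
    have i1 : 2*(i+1) = 2*i+2 := by ring
    have i2 : 2*(i+1)+1 = 2*i+3 := by ring
    have i3 : 2*(i+1)+2 = 2*i+4 := by ring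
    rw [i2] at hne hrow1 hd hkR ⊢
    rw [i1] at hcol1 hkR ⊢
    rw [i3] at hcol2
    have e0 : ch n (m % n) 0 = n := rfl
    have e1 : ch n (m % n) 1 = m % n := rfl
    have nz1' : ch n (m % n) 1 ≠ 0 :=
      ch_ne_zero' n (m % n) (s := 1) hne (by omega) (by omega)
    have nz1 : m % n ≠ 0 := by rwa [e1] at nz1'
    have nz2 : ch n (m % n) 2 ≠ 0 :=
      ch_ne_zero' n (m % n) (s := 2) hne (by omega) (by omega)
    have nz3 : ch n (m % n) 3 ≠ 0 :=
      ch_ne_zero' n (m % n) (s := 3) hne (by omega) (by omega)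
    have e2 : ch n (m % n) 2 = n % (m % n) := by
      rw [ch_succ, if_neg nz1', e1, e0]
    have e3 : ch n (m % n) 3 = (m % n) % ch n (m % n) 2 := by
      have h := ch_succ n (m % n) 1
      rw [if_neg nz2, e1] at h
      norm_num at h
      exact h
    have hrm : m % n ≤ m := Nat.mod_le m n
    have o1 : m % n < n := Nat.mod_lt m hn
    have o2 : ch n (m % n) 2 < m % n := by
      rw [e2]; exact Nat.mod_lt _ (by omega)
    have o3 : ch n (m % n) 3 < ch n (m % n) 2 := ch_strict n (m % n) 1 nz2
    have m3 : ch n (m % n) (2*i+3) ≤ ch n (m % n) 3 :=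
      ch_mono' n (m % n) (by omega) (by omega)
    have m2 : ch n (m % n) (2*i+2) ≤ ch n (m % n) 2 :=
      ch_mono' n (m % n) (by omega) (by omega)
    have s12 : n % (m % n) + m % n ≤ n := mod_plus n (m % n) nz1 (le_of_lt o1)
    have s12' : ch n (m % n) 2 + m % n ≤ n := by rw [e2]; exact s12
    -- rewrite hkR into subtraction form
    have hkn : k < n := by omega
    have hkge : n - ch n (m % n) 2 ≤ k := by omega
    have hkM : k % (n - ch n (m % n) (2*i+2)) = k - (n - ch n (m % n) (2*i+2)) := by
      rw [Nat.mod_eq_sub_mod (by omega : n - ch n (m % n) (2*i+2) ≤ k)]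
      exact Nat.mod_eq_of_lt (by omega)
    rw [hkM] at hkR
    -- the key mod identity for the inner call
    have hkR' : (k - (n - ch n (m % n) 2)) % (ch n (m % n) 2 - ch n (m % n) (2*i+2))
        = k - (n - ch n (m % n) (2*i+2)) := by
      by_cases hA2 : ch n (m % n) (2*i+2) = ch n (m % n) 2
      · rw [hA2, Nat.sub_self, Nat.mod_zero]
      · have hi1 : 1 ≤ i := by
          rcases Nat.eq_zero_or_pos i with h0 | h0
          · subst h0; norm_num at hA2
          · exact h0
        have m4 : ch n (m % n) (2*i+2) ≤ ch n (m % n) 4 :=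
          ch_mono' n (m % n) (by omega) (by omega)
        have e4 : ch n (m % n) 4 = ch n (m % n) 2 % ch n (m % n) 3 := by
          have h := ch_succ n (m % n) 2
          rw [if_neg nz3] at h
          norm_num at h
          exact h
        have s34 : ch n (m % n) 2 % ch n (m % n) 3 + ch n (m % n) 3 ≤ ch n (m % n) 2 :=
          mod_plus _ _ nz3 (le_of_lt o3)
        rw [← e4] at s34
        have o4 : ch n (m % n) 4 < ch n (m % n) 3 := ch_strict n (m % n) 2 nz3
        have hgoal : k - (n - ch n (m % n) 2) - (ch n (m % n) 2 - ch n (m % n) (2*i+2))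
            = k - (n - ch n (m % n) (2*i+2)) := by omega
        have hb1 : ch n (m % n) 2 - ch n (m % n) (2*i+2) ≤ k - (n - ch n (m % n) 2) := by omega
        have hb2 : k - (n - ch n (m % n) 2) - (ch n (m % n) 2 - ch n (m % n) (2*i+2))
            < ch n (m % n) 2 - ch n (m % n) (2*i+2) := by omega
        rw [Nat.mod_eq_sub_mod hb1, Nat.mod_eq_of_lt hb2, hgoal]
    have hkR2 : (k - (n - ch n (m % n) 2)) % (ch n (m % n) 2 - ch n (m % n) (2*i+2))
        = c * ch n (m % n) (2*i+3) + d := hkR'.trans hkR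
    -- shift lemma for the inner chain
    have hsh2 : ∀ t, ch (ch n (m % n) 2) (m % n % ch n (m % n) 2) t = ch n (m % n) (t+2) := by
      intro t
      rw [← e3]
      exact ch_shift n (m % n) t
    have E0 : ch (ch n (m % n) 2) (m % n % ch n (m % n) 2) (2*i) = ch n (m % n) (2*i+2) :=
      hsh2 (2*i)
    have E1 : ch (ch n (m % n) 2) (m % n % ch n (m % n) 2) (2*i+1) = ch n (m % n) (2*i+3) :=
      hsh2 (2*i+1)
    have E2 : ch (ch n (m % n) 2) (m % n % ch n (m % n) 2) (2*i+2) = ch n (m % n) (2*i+4) :=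
      hsh2 (2*i+2)
    -- decode hjk two levels
    rw [air_eq, if_neg (by omega), if_neg (by omega)] at hjk
    rw [air_eq, if_neg nz1, if_neg (by rw [← e2]; omega)] at hjk
    have hjkI : airFill (m % n) (ch n (m % n) 2) (j - (m - m % n))
        (k - (n - ch n (m % n) 2)) = true := by
      rw [e2]; exact hjk
    obtain ⟨p', hp1, hp2, hp3, hp4⟩ :=
      ih (ch n (m % n) 2) (m % n) (j - (m - m % n)) (k - (n - ch n (m % n) 2)) c d
        (by omega) (by omega)
        (by rw [E1]; exact hne)
        (by rw [E1]; omega)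
        (by omega)
        (by rw [← e3]; omega)
        (by rw [E0]; omega)
        (by rw [E2]; omega)
        (by rw [E0, E1]; exact hkR2)
        (by rw [E1]; exact hd)
        hjkI
    rw [E0, E1] at hp4
    refine ⟨(m - m % n) + p', by omega, ?_, ?_, by rw [← hp4]; omega⟩
    · rw [air_eq, if_neg (by omega), if_neg (by omega)]
      rw [show (m - m % n) + p' - (m - m % n) = p' from by omega]
      rw [air_eq, if_neg nz1, if_neg (by rw [← e2]; omega)]
      rw [← e2]
      exact hp2
    · intro q hq1 hq2
      rw [air_eq, if_neg (by omega), if_neg (by omega)]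
      rw [air_eq, if_neg nz1, if_neg (by rw [← e2]; omega)]
      rw [← e2]
      exact hp3 (q - (m - m % n)) (by omega) (by omega)

lemma dup_eq_of (K D j k p : ℕ) (h1 : p < j) (h2 : airFill K (D+1) p k = true)
    (h3 : ∀ q, p < q → q < j → airFill K (D+1) q k = false) :
    dup K D j k = j - p := by
  unfold dup
  congr 1
  apply le_antisymm
  · apply Finset.sup_le
    intro x hx
    simp only [Finset.mem_filter, Finset.mem_range] at hx
    by_contra hc
    simp only [id_eq, not_le] at hc
    have := h3 x hc hx.1
    rw [this] at hx
    simp at hx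
  · exact Finset.le_sup (f := id)
      (by simp only [Finset.mem_filter, Finset.mem_range]; exact ⟨h1, h2⟩)

lemma mult_gap (N x y : ℕ) (hx : x % N = 0) (hy : y % N = 0) (h : x < y) : x + N ≤ y := by
  obtain ⟨a, rfl⟩ := Nat.dvd_of_mod_eq_zero hx
  obtain ⟨b, rfl⟩ := Nat.dvd_of_mod_eq_zero hy
  have hab : a < b := by
    rcases Nat.lt_or_ge a b with h' | h'
    · exact h'
    · exact absurd (Nat.mul_le_mul_left N h') (by omega)
  calc N * a + N = N * (a + 1) := by ring
  _ ≤ N * b := Nat.mul_le_mul_left N (by omega)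

lemma col0 (M N x : ℕ) (hN : 0 < N) (hMN : N ≤ M) (hx : x < M) :
    (airFill M N x 0 = true ↔ x % N = 0) := by
  have hq := Nat.mod_add_div M N
  have hq1 : 1 ≤ M / N := (Nat.one_le_div_iff hN).mpr hMN
  rw [air_eq, if_neg (by omega)]
  by_cases hb : x < M - M % N
  · rw [if_pos hb]; simp [eq_comm]
  · rw [if_neg hb]
    have hr0 : M % N ≠ 0 := by omega
    have hrN : M % N < N := Nat.mod_lt _ hN
    rw [air_eq, if_neg hr0,
      if_pos (by have := Nat.mod_lt N (show 0 < M % N by omega); omega)]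
    rw [decide_eq_true_iff]
    simp only [Nat.zero_mod, decide_eq_true_eq]
    constructor
    · intro h
      have hxe : x = M - M % N := by omega
      rw [hxe, show M - M % N = N * (M / N) from by omega]
      exact Nat.mul_mod_right N _
    · intro h
      obtain ⟨a, rfl⟩ := Nat.dvd_of_mod_eq_zero h
      have hd2 : M - M % N = N * (M / N) := by omega
      rw [hd2] at hb ⊢
      push_neg at hb
      have h3 : M / N ≤ a := le_of_mul_le_mul_left hb hN
      have h4 : a < M / N + 1 := by
        by_contra hcc
        push_neg at hcc
        have hmm : N * (M / N + 1) ≤ N * a := Nat.mul_le_mul_left N hcc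
        have h5 : N * (M / N + 1) = N * (M / N) + N := by ring
        omega
      have : a = M / N := by omega
      subst this
      exact (Nat.sub_self _).symm

theorem stmt8 (K D l i j k c d : ℕ) (hDK : D + 1 < K)
    (hl : lam K D (l + 1) ≠ 0) (hl' : lam K D (l + 2) = 0)
    (heven : 2*i ≤ l)
    (hrow1 : K - lam K D (2*i+1) ≤ j) (hrow2 : j < K)
    (hcol1 : D + 1 - lam K D (2*i) ≤ k) (hcol2 : k ≤ D - lam K D (2*i+2))
    (hkR : k % (D + 1 - lam K D (2*i)) = c * lam K D (2*i+1) + d)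
    (hd : d < lam K D (2*i+1))
    (hj : D + 1 ≤ j)
    (hjk : airFill K (D+1) j k = true) :
    dup K D j k = lam K D (2*i) - c * lam K D (2*i+1) := by
  have hlam := lam_eq_ch K D
  have hnz : ∀ t, 1 ≤ t → t ≤ l + 1 → lam K D t ≠ 0 := by
    intro t h1 h2
    rw [hlam]
    exact ch_ne_zero' _ _ (by rw [← hlam]; exact hl) h1 h2
  have h2i1 : lam K D (2*i+1) ≠ 0 := hnz _ (by omega) (by omega)
  have hl1 : lam K D 1 = K - D - 1 := rfl
  have hl0 : lam K D 0 = D + 1 := rfl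
  have hne1 : lam K D 1 ≠ 0 := by omega
  rcases lt_trichotomy K (2*D+2) with hK | hK | hK
  · -- Case A : D + 1 < K < 2D+2
    have hmod : K % (D+1) = K - D - 1 := by
      rw [Nat.mod_eq_sub_mod (by omega : D + 1 ≤ K),
        Nat.mod_eq_of_lt (by omega : K - (D+1) < D + 1)]
      omega
    have chEq : ∀ t, lam K D t = ch (D+1) (K % (D+1)) t := by
      intro t; rw [hlam, hmod]
    have hup : lam K D (2*i+2) ≤ lam K D 1 := by
      rw [hlam, hlam]; exact ch_mono' _ _ (by omega) (by omega)
    obtain ⟨p, hp1, hp2, hp3, hp4⟩ :=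
      G i (D+1) K j k c d (by omega) (by omega)
        (by rw [← chEq]; exact h2i1)
        (by rw [← chEq]; exact hrow1)
        hrow2
        (by omega)
        (by rw [← chEq]; exact hcol1)
        (by rw [← chEq]; omega)
        (by rw [← chEq (2*i), ← chEq (2*i+1)]; exact hkR)
        (by rw [← chEq]; exact hd)
        hjk
    rw [← chEq (2*i), ← chEq (2*i+1)] at hp4
    rw [dup_eq_of K D j k p hp1 hp2 hp3]
    exact hp4
  · -- Case B : K = 2D + 2
    have e2 : lam K D 2 = 0 := by
      rw [show lam K D 2 = if lam K D 1 = 0 then 0 else lam K D 0 % lam K D 1 from rfl,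
        if_neg hne1, hl0, hl1, show K - D - 1 = D + 1 from by omega]
      exact Nat.mod_self (D+1)
    have hi0 : i = 0 := by
      by_contra hc
      have : lam K D (2*i+1) ≤ lam K D 2 := by
        rw [hlam, hlam]; exact ch_mono' _ _ (by omega) (by omega)
      omega
    subst hi0
    norm_num at hrow1 hcol1 hcol2 hkR hd h2i1 ⊢
    rw [hl0, Nat.sub_self, Nat.mod_zero, hl1] at hkR
    rw [e2] at hcol2
    rw [hl1] at hd
    have hc0 : c = 0 := by
      rcases c with _ | c'
      · rfl
      · exfalso
        have : (c'+1) * (K - D - 1) = c' * (K - D - 1) + (K - D - 1) := by ring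
        omega
    subst hc0
    rw [hl0, hl1]
    simp only [Nat.zero_mul, Nat.sub_zero]
    have hm0 : K % (D+1) = 0 := by
      rw [show K = 2 * (D + 1) from by omega]
      exact Nat.mul_mod_left 2 (D+1)
    rw [air_eq, if_neg (by omega), if_pos (by omega)] at hjk
    simp only [decide_eq_true_eq] at hjk
    have hjmod : j % (D+1) = j - (D+1) := by
      rw [Nat.mod_eq_sub_mod (by omega : D + 1 ≤ j)]
      exact Nat.mod_eq_of_lt (by omega)
    have hjk' : j = D + 1 + k := by omega
    have hkD : k < D + 1 := by omega
    rw [dup_eq_of K D j k k (by omega)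
      (by rw [air_eq, if_neg (by omega), if_pos (by omega)]
          simp [Nat.mod_eq_of_lt hkD])
      (by intro q hq1 hq2
          rw [air_eq, if_neg (by omega), if_pos (by omega)]
          simp only [decide_eq_false_iff_not]
          intro hqe
          have hdm := Nat.div_add_mod q (D+1)
          rw [hqe] at hdm
          rcases Nat.eq_zero_or_pos (q / (D+1)) with h0 | h0
          · rw [h0, Nat.mul_zero] at hdm; omega
          · have : (D+1) * 1 ≤ (D+1) * (q / (D+1)) := Nat.mul_le_mul_left _ h0
            omega)]
    omega
  · -- Case C : K > 2D + 2
    have e2 : lam K D 2 = D + 1 := by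
      rw [show lam K D 2 = if lam K D 1 = 0 then 0 else lam K D 0 % lam K D 1 from rfl,
        if_neg hne1, hl0, hl1]
      exact Nat.mod_eq_of_lt (by omega)
    have e3 : lam K D 3 = K % (D+1) := by
      rw [show lam K D 3 = if lam K D 2 = 0 then 0 else lam K D 1 % lam K D 2 from rfl,
        if_neg (by omega), hl1, e2,
        show K - D - 1 = K - (D+1) from by omega]
      exact (Nat.mod_eq_sub_mod (by omega)).symm
    rcases i with _ | i'
    · -- i = 0 : then k = 0 and dup = D + 1
      norm_num at hrow1 hcol1 hcol2 hkR hd h2i1 ⊢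
      rw [e2] at hcol2
      have hk0 : k = 0 := by omega
      subst hk0
      rw [hl0, Nat.sub_self, Nat.mod_zero, hl1] at hkR
      rw [hl1] at hd
      have hc0 : c = 0 := by
        rcases c with _ | c'
        · rfl
        · exfalso
          have : (c'+1) * (K - D - 1) = c' * (K - D - 1) + (K - D - 1) := by ring
          omega
      subst hc0
      rw [hl0, hl1]
      simp only [Nat.zero_mul, Nat.sub_zero]
      have hcj : j % (D+1) = 0 := (col0 K (D+1) j (by omega) (by omega) hrow2).mp hjk
      obtain ⟨a, ha⟩ := Nat.dvd_of_mod_eq_zero hcj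
      have ha1 : 1 ≤ a := by
        rcases Nat.eq_zero_or_pos a with h0 | h0
        · rw [h0, Nat.mul_zero] at ha; omega
        · exact h0
      obtain ⟨b, rfl⟩ : ∃ b, a = b + 1 := ⟨a - 1, by omega⟩
      have hb : (D+1) * (b+1) = (D+1) * b + (D+1) := by ring
      have hp_air : airFill K (D+1) (j - (D+1)) 0 = true := by
        rw [col0 K (D+1) _ (by omega) (by omega) (by omega)]
        rw [show j - (D+1) = (D+1) * b from by omega]
        exact Nat.mul_mod_right _ _
      rw [dup_eq_of K D j 0 (j - (D+1)) (by omega) hp_air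
        (by intro q hq1 hq2
            by_contra hcq
            rw [Bool.not_eq_false] at hcq
            have hq0 := (col0 K (D+1) q (by omega) (by omega) (by omega)).mp hcq
            have hgap := mult_gap (D+1) (j - (D+1)) q
              (by rw [show j - (D+1) = (D+1) * b from by omega]
                  exact Nat.mul_mod_right _ _) hq0 hq1
            omega)]
      omega
    · -- i = i' + 1
      have I1 : 2*(i'+1) = 2*i'+2 := by ring
      have I2 : 2*(i'+1)+1 = 2*i'+3 := by ring
      have I3 : 2*(i'+1)+2 = 2*i'+4 := by ring
      rw [I2] at hrow1 hkR hd h2i1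
      rw [I1] at hcol1 hkR
      rw [I3] at hcol2
      rw [I2, I1]
      have chEqC : ∀ t, ch (D+1) (K % (D+1)) t = lam K D (t+2) := by
        intro t
        rw [hlam (t+2), ← ch_shift (D+1) (K-D-1) t,
          show ch (D+1) (K-D-1) 2 = D+1 from by rw [← hlam]; exact e2,
          show ch (D+1) (K-D-1) 3 = K % (D+1) from by rw [← hlam]; exact e3]
      have F0 : ch (D+1) (K % (D+1)) (2*i') = lam K D (2*i'+2) := chEqC (2*i')
      have F1 : ch (D+1) (K % (D+1)) (2*i'+1) = lam K D (2*i'+3) := chEqC (2*i'+1)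
      have F2 : ch (D+1) (K % (D+1)) (2*i'+2) = lam K D (2*i'+4) := chEqC (2*i'+2)
      have hl3 : lam K D 3 ≠ 0 := hnz 3 (by omega) (by omega)
      have m3 : lam K D (2*i'+3) ≤ lam K D 3 := by
        rw [hlam, hlam]; exact ch_mono' _ _ (by omega) (by omega)
      have m4 : lam K D (2*i'+4) ≤ lam K D 4 := by
        rw [hlam, hlam]; exact ch_mono' _ _ (by omega) (by omega)
      have o4 : lam K D 4 < lam K D 3 := by
        rw [hlam, hlam]
        exact ch_strict _ _ 2 (by rw [← hlam]; exact hl3)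
      have hr : K % (D+1) < D + 1 := Nat.mod_lt _ (by omega)
      obtain ⟨p, hp1, hp2, hp3, hp4⟩ :=
        G i' (D+1) K j k c d (by omega) (by omega)
          (by rw [F1]; exact h2i1)
          (by rw [F1]; exact hrow1)
          hrow2
          (by omega)
          (by rw [F0]; exact hcol1)
          (by rw [F2]; omega)
          (by rw [F0, F1]; exact hkR)
          (by rw [F1]; exact hd)
          hjk
      rw [F0, F1] at hp4
      rw [dup_eq_of K D j k p hp1 hp2 hp3]
      exact hp4
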